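/- Let δ be an ordinal. Suppose ℝ² = X₁ ∪ X₂ where X₁ is an ℵ_δ-spray with some center c₁ ∈ ℝ² and X₂ is an ℵ_{δ+1}-spray with some center c₂ ∈ ℝ². Then 2^ℵ₀ ≤ ℵ_δ. -/

import Mathlib

open Cardinal

/-- An ℵ_δ-spray with center `c`: every sphere centered at `c` meets `X` in a set of
cardinality less than `ℵ_δ`. -/
def IsAlephSpray {d : ℕ} (δ : Ordinal) (c : EuclideanSpace ℝ (Fin d))
    (X : Set (EuclideanSpace ℝ (Fin d))) : Prop :=
  ∀ r : ℝ, Cardinal.mk {x ∈ X | ‖x - c‖ = r} < aleph δ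

/-- Auxiliary: build a point of the plane from two coordinates. -/
noncomputable def mkpt (u v : ℝ) : EuclideanSpace ℝ (Fin 2) :=
  (WithLp.equiv 2 (Fin 2 → ℝ)).symm ![u, v]

@[simp] lemma mkpt_zero (u v : ℝ) : mkpt u v 0 = u := rfl
@[simp] lemma mkpt_one (u v : ℝ) : mkpt u v 1 = v := rfl

lemma norm_eq2 (x : EuclideanSpace ℝ (Fin 2)) : ‖x‖ = Real.sqrt (x 0 ^ 2 + x 1 ^ 2) := by
  rw [EuclideanSpace.norm_eq, Fin.sum_univ_two]
  norm_num

lemma dist_sq2 (x y : EuclideanSpace ℝ (Fin 2)) :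
    (x 0 - y 0) ^ 2 + (x 1 - y 1) ^ 2 = dist x y ^ 2 := by
  have h : dist x y = ‖x - y‖ := dist_eq_norm x y
  rw [h, norm_eq2, Real.sq_sqrt (by positivity)]
  simp

lemma alg1 (d s a h w0 w1 : ℝ) (hdne : d ≠ 0) (hw : w0^2+w1^2 = d^2)
    (hh : h^2 = s^2 - a^2) :
    ((a * w0 - h * w1) / d) ^ 2 + ((a * w1 + h * w0) / d) ^ 2 = s ^ 2 := by
  field_simp
  linear_combination (a^2+h^2) * hw + d^2 * hh

lemma alg2 (d s t a h w0 w1 : ℝ) (hdne : d ≠ 0) (hw : w0^2+w1^2 = d^2)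
    (hh : h^2 = s^2 - a^2) (ha2 : 2*d*a = d^2+s^2-t^2) :
    (((a - d) * w0 - h * w1) / d) ^ 2 + (((a - d) * w1 + h * w0) / d) ^ 2 = t ^ 2 := by
  field_simp
  linear_combination ((a-d)^2+h^2) * hw + d^2 * hh + (-d^2) * ha2

/-- Two circles in the plane whose radii satisfy the triangle-type inequalities intersect. -/
lemma exists_circle_inter (c₁ c₂ : EuclideanSpace ℝ (Fin 2)) (s t : ℝ)
    (hs : 0 ≤ s) (ht : 0 ≤ t) (hd : c₁ ≠ c₂)
    (h1 : |s - t| ≤ dist c₁ c₂) (h2 : dist c₁ c₂ ≤ s + t) :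
    ∃ p : EuclideanSpace ℝ (Fin 2), ‖p - c₁‖ = s ∧ ‖p - c₂‖ = t := by
  set d : ℝ := dist c₁ c₂ with hdd
  have hd0 : 0 < d := dist_pos.mpr hd
  have hdne : d ≠ 0 := ne_of_gt hd0
  set w0 : ℝ := c₂ 0 - c₁ 0 with hw0
  set w1 : ℝ := c₂ 1 - c₁ 1 with hw1
  have hw : w0 ^ 2 + w1 ^ 2 = d ^ 2 := by
    have := dist_sq2 c₂ c₁
    rw [dist_comm] at this
    exact this
  rw [abs_sub_le_iff] at h1
  set a : ℝ := (d ^ 2 + s ^ 2 - t ^ 2) / (2 * d) with ha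
  have ha2 : 2 * d * a = d ^ 2 + s ^ 2 - t ^ 2 := by
    rw [ha]; field_simp
  have hsa : a ^ 2 ≤ s ^ 2 := by
    have f1 : 0 ≤ s + d - t := by linarith [h1.2]
    have f2 : 0 ≤ d + t - s := by linarith [h1.1]
    have f3 : 0 ≤ s + t - d := by linarith
    have f4 : 0 ≤ s + t + d := by linarith
    have key : (d ^ 2 + s ^ 2 - t ^ 2) ^ 2 ≤ (2 * d * s) ^ 2 := by
      nlinarith [mul_nonneg (mul_nonneg (mul_nonneg f1 f2) f3) f4]
    have h2d : (0:ℝ) < (2 * d) ^ 2 := by positivity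
    rw [ha, div_pow, div_le_iff₀ h2d]
    calc (d ^ 2 + s ^ 2 - t ^ 2) ^ 2 ≤ (2 * d * s) ^ 2 := key
      _ = s ^ 2 * (2 * d) ^ 2 := by ring
  set h : ℝ := Real.sqrt (s ^ 2 - a ^ 2) with hhdef
  have hh : h ^ 2 = s ^ 2 - a ^ 2 := Real.sq_sqrt (by linarith)
  refine ⟨mkpt (c₁ 0 + (a * w0 - h * w1) / d) (c₁ 1 + (a * w1 + h * w0) / d), ?_, ?_⟩
  · rw [norm_eq2]
    have e0 : (mkpt (c₁ 0 + (a * w0 - h * w1) / d) (c₁ 1 + (a * w1 + h * w0) / d) - c₁) 0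
        = (a * w0 - h * w1) / d := by simp [PiLp.sub_apply]
    have e1 : (mkpt (c₁ 0 + (a * w0 - h * w1) / d) (c₁ 1 + (a * w1 + h * w0) / d) - c₁) 1
        = (a * w1 + h * w0) / d := by simp [PiLp.sub_apply]
    rw [e0, e1, alg1 d s a h w0 w1 hdne hw hh, Real.sqrt_sq hs]
  · rw [norm_eq2]
    have e0 : (mkpt (c₁ 0 + (a * w0 - h * w1) / d) (c₁ 1 + (a * w1 + h * w0) / d) - c₂) 0
        = ((a - d) * w0 - h * w1) / d := by
      simp only [PiLp.sub_apply, mkpt_zero]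
      field_simp [hw0]
      ring
    have e1 : (mkpt (c₁ 0 + (a * w0 - h * w1) / d) (c₁ 1 + (a * w1 + h * w0) / d) - c₂) 1
        = ((a - d) * w1 + h * w0) / d := by
      simp only [PiLp.sub_apply, mkpt_one]
      field_simp [hw1]
      ring
    rw [e0, e1, alg2 d s t a h w0 w1 hdne hw hh ha2, Real.sqrt_sq ht]

theorem stmt5 (δ : Ordinal) (c₁ c₂ : EuclideanSpace ℝ (Fin 2))
    (X₁ X₂ : Set (EuclideanSpace ℝ (Fin 2)))
    (h1 : IsAlephSpray δ c₁ X₁) (h2 : IsAlephSpray (δ + 1) c₂ X₂)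
    (hcover : X₁ ∪ X₂ = Set.univ) :
    continuum ≤ aleph δ := by
  by_contra hcon
  push_neg at hcon
  set κ : Cardinal := aleph δ with hκ
  have hκinf : ℵ₀ ≤ κ := aleph0_le_aleph δ
  have h2' : ∀ r : ℝ, Cardinal.mk {x ∈ X₂ | ‖x - c₂‖ = r} ≤ κ := by
    intro r
    have h := h2 r
    rw [show (δ + 1 : Ordinal) = Order.succ δ from (Ordinal.add_one_eq_succ δ),
      aleph_succ, Order.lt_succ_iff] at h
    exact h
  have hmem : ∀ p : EuclideanSpace ℝ (Fin 2), p ∈ X₁ ∨ p ∈ X₂ := by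
    intro p
    have hp : p ∈ X₁ ∪ X₂ := by rw [hcover]; trivial
    exact hp
  by_cases hc : c₁ = c₂
  · -- degenerate case: common center; the unit circle has continuum many points
    subst hc
    have hinj : continuum ≤ Cardinal.mk {x : EuclideanSpace ℝ (Fin 2) | ‖x - c₁‖ = 1} := by
      rw [← Cardinal.mk_Ioo_real (show (0:ℝ) < 1 by norm_num)]
      have hmemf : ∀ r : Set.Ioo (0:ℝ) 1,
          (c₁ + mkpt (r:ℝ) (Real.sqrt (1 - (r:ℝ)^2))) ∈
            {x : EuclideanSpace ℝ (Fin 2) | ‖x - c₁‖ = 1} := by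
        rintro ⟨r, hr0, hr1⟩
        have hr2 : (0:ℝ) ≤ 1 - r^2 := by nlinarith
        simp only [Set.mem_setOf_eq, add_sub_cancel_left, norm_eq2, mkpt_zero, mkpt_one]
        rw [Real.sq_sqrt hr2]
        norm_num
      refine Cardinal.mk_le_of_injective (f := fun r => ⟨_, hmemf r⟩) ?_
      intro u v huv
      have huv' : (c₁ + mkpt (u:ℝ) (Real.sqrt (1 - (u:ℝ)^2)))
          = (c₁ + mkpt (v:ℝ) (Real.sqrt (1 - (v:ℝ)^2))) := congrArg Subtype.val huv
      have h0 := congrArg (fun z : EuclideanSpace ℝ (Fin 2) => z 0) huv'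
      simp only [PiLp.add_apply, mkpt_zero, add_right_inj] at h0
      exact Subtype.ext h0
    have hsub : {x : EuclideanSpace ℝ (Fin 2) | ‖x - c₁‖ = 1} ⊆
        {x ∈ X₁ | ‖x - c₁‖ = 1} ∪ {x ∈ X₂ | ‖x - c₁‖ = 1} := by
      intro x hx
      rcases hmem x with h | h
      · exact Or.inl ⟨h, hx⟩
      · exact Or.inr ⟨h, hx⟩
    have hle : Cardinal.mk {x : EuclideanSpace ℝ (Fin 2) | ‖x - c₁‖ = 1} ≤ κ := by
      calc Cardinal.mk {x : EuclideanSpace ℝ (Fin 2) | ‖x - c₁‖ = 1}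
          ≤ Cardinal.mk ({x ∈ X₁ | ‖x - c₁‖ = 1} ∪ {x ∈ X₂ | ‖x - c₁‖ = 1} :
              Set (EuclideanSpace ℝ (Fin 2))) := Cardinal.mk_le_mk_of_subset hsub
        _ ≤ Cardinal.mk {x ∈ X₁ | ‖x - c₁‖ = 1} + Cardinal.mk {x ∈ X₂ | ‖x - c₁‖ = 1} :=
            Cardinal.mk_union_le _ _
        _ ≤ κ + κ := add_le_add (h1 1).le (h2' 1)
        _ = κ := Cardinal.add_eq_self hκinf
    exact absurd (hinj.trans hle) (not_le.mpr hcon)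
  · -- main case: distinct centers
    set d : ℝ := dist c₁ c₂ with hdd
    have hd0 : 0 < d := dist_pos.mpr hc
    have hIoo : Cardinal.mk (Set.Ioo d (2*d)) = continuum :=
      Cardinal.mk_Ioo_real (by linarith)
    obtain ⟨T₀, hT₀⟩ : ∃ T₀ : Set (Set.Ioo d (2*d)), Cardinal.mk T₀ = κ := by
      refine Cardinal.le_mk_iff_exists_set.mp ?_
      rw [hIoo]
      exact hcon.le
    set B : Set ℝ := ⋃ t : T₀, (fun x : EuclideanSpace ℝ (Fin 2) => ‖x - c₁‖) ''
      {x ∈ X₂ | ‖x - c₂‖ = ((t : Set.Ioo d (2*d)) : ℝ)} with hBdef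
    have hB : Cardinal.mk B ≤ κ := by
      calc Cardinal.mk B
          ≤ Cardinal.sum (fun t : T₀ => Cardinal.mk
              ((fun x : EuclideanSpace ℝ (Fin 2) => ‖x - c₁‖) ''
              {x ∈ X₂ | ‖x - c₂‖ = ((t : Set.Ioo d (2*d)) : ℝ)})) :=
            Cardinal.mk_iUnion_le_sum_mk
        _ ≤ Cardinal.sum (fun _ : T₀ => κ) := by
            refine Cardinal.sum_le_sum _ _ (fun t => ?_)
            exact (Cardinal.mk_image_le).trans (h2' _)
        _ = Cardinal.mk T₀ * κ := Cardinal.sum_const' _ _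
        _ = κ * κ := by rw [hT₀]
        _ = κ := Cardinal.mul_eq_self hκinf
    have hnsub : ¬ (Set.Ioo d (2*d) ⊆ B) := by
      intro hsub
      have := (Cardinal.mk_le_mk_of_subset hsub)
      rw [hIoo] at this
      exact absurd (this.trans hB) (not_le.mpr hcon)
    rw [Set.not_subset] at hnsub
    obtain ⟨s, hsI, hsB⟩ := hnsub
    obtain ⟨hs1, hs2⟩ := hsI
    have key : ∀ t : T₀, ∃ p : EuclideanSpace ℝ (Fin 2),
        p ∈ X₁ ∧ ‖p - c₁‖ = s ∧ ‖p - c₂‖ = ((t : Set.Ioo d (2*d)) : ℝ) := by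
      rintro ⟨⟨t, ht1, ht2⟩, htT⟩
      have habs : |s - t| ≤ d := by
        rw [abs_sub_le_iff]
        constructor <;> linarith
      obtain ⟨p, hp1, hp2⟩ := exists_circle_inter c₁ c₂ s t (by linarith) (by linarith)
        hc habs (by linarith)
      rcases hmem p with h | h
      · exact ⟨p, h, hp1, hp2⟩
      · exfalso
        apply hsB
        rw [hBdef]
        refine Set.mem_iUnion.mpr ⟨⟨⟨t, ht1, ht2⟩, htT⟩, ?_⟩
        exact ⟨p, ⟨h, hp2⟩, hp1⟩
    choose F hF1 hFs hFt using key
    have hFinj : Function.Injective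
        (fun t : T₀ => (⟨F t, hF1 t, hFs t⟩ : {x ∈ X₁ | ‖x - c₁‖ = s})) := by
      intro u v huv
      have hFuv : F u = F v := congrArg Subtype.val huv
      have : ((u : Set.Ioo d (2*d)) : ℝ) = ((v : Set.Ioo d (2*d)) : ℝ) := by
        rw [← hFt u, ← hFt v, hFuv]
      exact Subtype.ext (Subtype.ext this)
    have hle := Cardinal.mk_le_of_injective hFinj
    rw [hT₀] at hle
    exact absurd (hle.trans_lt (h1 s)) (lt_irrefl κ)
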